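/- Let λ₁, λ₂, λ₃, λ₄ be elements of any type (in particular complex numbers). Then there exist three indices i < j < k in {1,2,3,4} with λ_i = λ_j = λ_k if and only if (λ₁ = λ₂ or λ₃ = λ₄) and (λ₁ = λ₃ or λ₂ = λ₄) and (λ₁ = λ₄ or λ₂ = λ₃). -/

import Mathlib

/-- For four elements of any type, some three of them coincide iff
    `(λ₁ = λ₂ ∨ λ₃ = λ₄) ∧ (λ₁ = λ₃ ∨ λ₂ = λ₄) ∧ (λ₁ = λ₄ ∨ λ₂ = λ₃)`. -/
theorem three_of_four_coincide_iff {α : Type*} (f : Fin 4 → α) :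
    (∃ i j k : Fin 4, i < j ∧ j < k ∧ f i = f j ∧ f j = f k) ↔
      ((f 0 = f 1 ∨ f 2 = f 3) ∧ (f 0 = f 2 ∨ f 1 = f 3)
        ∧ (f 0 = f 3 ∨ f 1 = f 2)) := by
  constructor
  · rintro ⟨i, j, k, hij, hjk, h1, h2⟩
    fin_cases i <;> fin_cases j <;> fin_cases k <;> simp_all
  · rintro ⟨h1 | h1, h2 | h2, h3 | h3⟩
    · exact ⟨0, 1, 2, by decide, by decide, by grind, by grind⟩
    · exact ⟨0, 1, 2, by decide, by decide, by grind, by grind⟩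
    · exact ⟨0, 1, 3, by decide, by decide, by grind, by grind⟩
    · exact ⟨0, 1, 2, by decide, by decide, by grind, by grind⟩
    · exact ⟨0, 2, 3, by decide, by decide, by grind, by grind⟩
    · exact ⟨0, 2, 3, by decide, by decide, by grind, by grind⟩
    · exact ⟨1, 2, 3, by decide, by decide, by grind, by grind⟩
    · exact ⟨1, 2, 3, by decide, by decide, by grind, by grind⟩
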